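/- Let σ ∈ (0,2), π ∈ 𝔄^σ, and let κ be a scaling function with scaling factor l. Assume there is n₁ > 0 such that ∫_{|y|≤1}|ξ·y|² π̃_R(dy) ≥ n₁ for all R > 0 and all unit vectors ξ ∈ ℝ^d. Then there is a constant c₂ = c₂(l) > 0 such that ∫[1 − cos(2πξ·y)]π(dy) ≥ c₂ n₁ κ(|ξ|^{−1})^{−1} for all ξ ∈ ℝ^d (with the convention κ(|ξ|^{−1})^{−1} = 0 when ξ = 0). -/

import Mathlib

open MeasureTheory Filter
open scoped Classical
open scoped ENNReal RealInnerProductSpace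

noncomputable section

abbrev Rd (d : ℕ) := EuclideanSpace ℝ (Fin d)

variable {d : ℕ}

/-- The truncation function `χ_σ`. -/
def chiSigma (σ : ℝ) (y : Rd d) : ℝ :=
  if σ < 1 then 0 else if σ = 1 then (if ‖y‖ ≤ 1 then 1 else 0) else 1

/-- Membership in the class `𝔄^σ`. -/
def MemA (σ : ℝ) (ν : Measure (Rd d)) : Prop :=
  ν {0} = 0 ∧
  (∫⁻ y, ENNReal.ofReal (min (‖y‖ ^ 2) 1) ∂ν) < ∞ ∧
  σ = sInf {α : ℝ | α < 2 ∧ (∫⁻ y in {y : Rd d | ‖y‖ ≤ 1}, ENNReal.ofReal (‖y‖ ^ α) ∂ν) < ∞} ∧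
  (1 < σ → (∫⁻ y in {y : Rd d | 1 < ‖y‖}, ENNReal.ofReal ‖y‖ ∂ν) < ∞) ∧
  (σ = 1 → ∀ R R' : ℝ, 0 < R → R < R' →
    (∫ y in {y : Rd d | R < ‖y‖ ∧ ‖y‖ ≤ R'}, y ∂ν) = 0)

/-- The symbol `ψ^π`. -/
def symb (σ : ℝ) (ν : Measure (Rd d)) (ξ : Rd d) : ℂ :=
  ∫ y, (Complex.exp (Complex.I * ((2 * Real.pi * ⟪ξ, y⟫ : ℝ) : ℂ))
        - 1 - Complex.I * ((2 * Real.pi * chiSigma σ y * ⟪ξ, y⟫ : ℝ) : ℂ)) ∂ν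

/-- The rescaled measure `π̃_R = κ(R) π_R`. -/
def scaledM (κ : ℝ → ℝ) (ν : Measure (Rd d)) (R : ℝ) : Measure (Rd d) :=
  ENNReal.ofReal (κ R) • ν.map (fun y => R⁻¹ • y)

/-- `κ` is a scaling function with scaling factor `l`. -/
structure ScalingPair (κ l : ℝ → ℝ) : Prop where
  pos : ∀ r > 0, 0 < κ r
  cont : ContinuousOn κ (Set.Ioi 0)
  zero : Tendsto κ (nhdsWithin 0 (Set.Ioi 0)) (nhds 0)
  top : Tendsto κ atTop atTop
  l_mono : MonotoneOn l (Set.Ioi 0)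
  l_cont : ContinuousOn l (Set.Ioi 0)
  l_zero : Tendsto l (nhdsWithin 0 (Set.Ioi 0)) (nhds 0)
  scale : ∀ ε > 0, ∀ r > 0, κ (ε * r) ≤ l ε * κ r

/-- Key one-dimensional estimate: `1 - cos t ≥ (2/π²) t²` for `|t| ≤ 1`. -/
lemma one_sub_cos_ge (t : ℝ) (ht : |t| ≤ 1) :
    2 / Real.pi ^ 2 * t ^ 2 ≤ 1 - Real.cos t := by
  have h := Real.cos_le_one_sub_mul_cos_sq (x := t)
    (ht.trans (by linarith [Real.pi_gt_three]))
  linarith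

/-- lower bound on the real part of the symbol. -/
theorem statement_10 (d : ℕ) (σ : ℝ) (hσ : σ ∈ Set.Ioo (0:ℝ) 2)
    (ν : Measure (Rd d)) (hν : MemA σ ν)
    (κ l : ℝ → ℝ) (hκ : ScalingPair κ l) (n1 : ℝ) (hn1 : 0 < n1)
    (hlow : ∀ R > 0, ∀ ξ : Rd d, ‖ξ‖ = 1 →
      ENNReal.ofReal n1
        ≤ ∫⁻ y in {y : Rd d | ‖y‖ ≤ 1}, ENNReal.ofReal (⟪ξ, y⟫ ^ 2) ∂scaledM κ ν R) :
    ∃ c2 : ℝ, 0 < c2 ∧ ∀ ξ : Rd d,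
      ENNReal.ofReal (c2 * n1 * (if ξ = 0 then 0 else (κ ‖ξ‖⁻¹)⁻¹))
        ≤ ∫⁻ y, ENNReal.ofReal (1 - Real.cos (2 * Real.pi * ⟪ξ, y⟫)) ∂ν := by
  have hπ := Real.pi_pos
  set ε : ℝ := (2 * Real.pi)⁻¹ with hεdef
  have hε : 0 < ε := by positivity
  have hL : 0 < l ε := by
    have h1 := hκ.scale ε hε 1 one_pos
    have h2 := hκ.pos (ε * 1) (by positivity)
    have h3 := hκ.pos 1 one_pos
    nlinarith
  refine ⟨(2 / Real.pi ^ 2) / l ε, by positivity, fun ξ => ?_⟩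
  by_cases hξ : ξ = 0
  · simp [hξ]
  rw [if_neg hξ]
  have hξn : (0:ℝ) < ‖ξ‖ := norm_pos_iff.mpr hξ
  set R : ℝ := ‖ξ‖⁻¹ with hRdef
  have hR : 0 < R := by positivity
  set R' : ℝ := ε * R with hR'def
  have hR' : 0 < R' := by positivity
  set η : Rd d := ‖ξ‖⁻¹ • ξ with hηdef
  have hηn : ‖η‖ = 1 := by
    rw [hηdef, norm_smul, norm_inv, norm_norm, inv_mul_cancel₀ hξn.ne']
  have hκR := hκ.pos R hR
  have hκR' := hκ.pos R' hR'
  -- hypothesis at scale R'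
  have hyp := hlow R' hR' η hηn
  -- rewrite the scaled-measure integral
  have hmeasf : Measurable (fun y : Rd d => ENNReal.ofReal (⟪η, y⟫ ^ 2)) :=
    (((continuous_const.inner continuous_id).pow 2).measurable).ennreal_ofReal
  have hmeasg : Measurable (fun y : Rd d => R'⁻¹ • y) :=
    (continuous_const_smul _).measurable
  have hsets : MeasurableSet {y : Rd d | ‖y‖ ≤ 1} :=
    measurableSet_le (by fun_prop) (by fun_prop)
  set I : ℝ≥0∞ := ∫⁻ y in {y : Rd d | ‖y‖ ≤ R'}, ENNReal.ofReal (⟪η, y⟫ ^ 2) ∂ν with hIdef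
  have hrw : (∫⁻ y in {y : Rd d | ‖y‖ ≤ 1}, ENNReal.ofReal (⟪η, y⟫ ^ 2) ∂scaledM κ ν R')
      = ENNReal.ofReal (κ R') * (ENNReal.ofReal (R'⁻¹ ^ 2) * I) := by
    rw [scaledM, Measure.restrict_smul, lintegral_smul_measure,
      setLIntegral_map hsets hmeasf hmeasg]
    congr 1
    have hpre : (fun y : Rd d => R'⁻¹ • y) ⁻¹' {y : Rd d | ‖y‖ ≤ 1}
        = {y : Rd d | ‖y‖ ≤ R'} := by
      ext y
      simp only [Set.mem_preimage, Set.mem_setOf_eq, norm_smul, norm_inv, Real.norm_eq_abs,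
        abs_of_pos hR']
      rw [inv_mul_le_iff₀ hR', mul_one]
    rw [hpre, hIdef, ← lintegral_const_mul _ hmeasf]
    refine setLIntegral_congr_fun (measurableSet_le (by fun_prop) (by fun_prop))
      (fun y _ => ?_)
    rw [real_inner_smul_right, mul_pow, ← ENNReal.ofReal_mul (by positivity)]
  rw [hrw] at hyp
  -- lower-bound the target integral by the set integral of the quadratic
  have hmeas2 : Measurable (fun y : Rd d =>
      ENNReal.ofReal (1 - Real.cos (2 * Real.pi * ⟪ξ, y⟫))) := by
    have : Continuous (fun y : Rd d => 1 - Real.cos (2 * Real.pi * ⟪ξ, y⟫)) :=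
      continuous_const.sub (Real.continuous_cos.comp
        (continuous_const.mul (continuous_const.inner continuous_id)))
    exact this.measurable.ennreal_ofReal
  have step1 : ENNReal.ofReal (8 * ‖ξ‖ ^ 2) * I
      ≤ ∫⁻ y, ENNReal.ofReal (1 - Real.cos (2 * Real.pi * ⟪ξ, y⟫)) ∂ν := by
    refine le_trans ?_ (setLIntegral_le_lintegral {y : Rd d | ‖y‖ ≤ R'} _)
    rw [hIdef, ← lintegral_const_mul _ hmeasf]
    refine setLIntegral_mono hmeas2 fun y hy => ?_
    have hip : ⟪ξ, y⟫ = ‖ξ‖ * ⟪η, y⟫ := by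
      rw [hηdef, real_inner_smul_left]
      field_simp
    have habs : |2 * Real.pi * ⟪ξ, y⟫| ≤ 1 := by
      have h1 : |⟪ξ, y⟫| ≤ ‖ξ‖ * ‖y‖ := abs_real_inner_le_norm ξ y
      have h2 : ‖y‖ ≤ R' := hy
      have h3 : ‖ξ‖ * R' = ε := by
        rw [hR'def, hRdef]; field_simp
      have h4 : |⟪ξ, y⟫| ≤ ‖ξ‖ * R' :=
        h1.trans (mul_le_mul_of_nonneg_left h2 hξn.le)
      rw [abs_mul, abs_of_pos (by positivity : (0:ℝ) < 2 * Real.pi)]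
      calc 2 * Real.pi * |⟪ξ, y⟫| ≤ 2 * Real.pi * (‖ξ‖ * R') := by
            exact mul_le_mul_of_nonneg_left h4 (by positivity)
        _ = 2 * Real.pi * ε := by rw [h3]
        _ = 1 := by rw [hεdef]; field_simp
    have hkey := one_sub_cos_ge _ habs
    rw [← ENNReal.ofReal_mul (by positivity)]
    refine ENNReal.ofReal_le_ofReal ?_
    calc 8 * ‖ξ‖ ^ 2 * ⟪η, y⟫ ^ 2 = 2 / Real.pi ^ 2 * (2 * Real.pi * ⟪ξ, y⟫) ^ 2 := by
          rw [hip]; field_simp; ring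
      _ ≤ 1 - Real.cos (2 * Real.pi * ⟪ξ, y⟫) := hkey
  -- arithmetic on the constants
  set a : ℝ := 8 * ‖ξ‖ ^ 2 * R' ^ 2 / κ R' with hadef
  have hx : ‖ξ‖ * R = 1 := mul_inv_cancel₀ hξn.ne'
  have h8 : 8 * ‖ξ‖ ^ 2 * R' ^ 2 = 2 / Real.pi ^ 2 := by
    calc 8 * ‖ξ‖ ^ 2 * R' ^ 2 = 8 * (‖ξ‖ * R) ^ 2 * ε ^ 2 := by rw [hR'def]; ring
      _ = 8 * ε ^ 2 := by rw [hx]; ring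
      _ = 2 / Real.pi ^ 2 := by rw [hεdef]; field_simp; ring
  have ha : a = 2 / Real.pi ^ 2 / κ R' := by rw [hadef, h8]
  have hsc : κ R' ≤ l ε * κ R := hκ.scale ε hε R hR
  have key : 2 / Real.pi ^ 2 / l ε * n1 * (κ R)⁻¹ ≤ a * n1 := by
    calc 2 / Real.pi ^ 2 / l ε * n1 * (κ R)⁻¹
        = 2 / Real.pi ^ 2 * n1 / (l ε * κ R) := by field_simp
      _ ≤ 2 / Real.pi ^ 2 * n1 / κ R' := by
          apply div_le_div_of_nonneg_left (by positivity) hκR' hsc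
      _ = a * n1 := by rw [ha]; ring
  calc ENNReal.ofReal (2 / Real.pi ^ 2 / l ε * n1 * (κ R)⁻¹)
      ≤ ENNReal.ofReal (a * n1) := ENNReal.ofReal_le_ofReal key
    _ = ENNReal.ofReal a * ENNReal.ofReal n1 := ENNReal.ofReal_mul (by positivity)
    _ ≤ ENNReal.ofReal a *
        (ENNReal.ofReal (κ R') * (ENNReal.ofReal (R'⁻¹ ^ 2) * I)) := by
          exact mul_le_mul_right hyp _
    _ = ENNReal.ofReal (a * κ R' * R'⁻¹ ^ 2) * I := by
          rw [ENNReal.ofReal_mul (by positivity), ENNReal.ofReal_mul (by positivity)]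
          ring
    _ = ENNReal.ofReal (8 * ‖ξ‖ ^ 2) * I := by
          congr 1
          rw [hadef]
          field_simp
    _ ≤ ∫⁻ y, ENNReal.ofReal (1 - Real.cos (2 * Real.pi * ⟪ξ, y⟫)) ∂ν := step1
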